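/- Suppose 0 < τ_1 ≤ ... ≤ τ_n, let j_B ∈ [n], S ≥ 0, and assume τ_j ≥ B for all j > j_B, where B ≥ (S + j_B)/(∑_{i=1}^{j_B} 1/τ_i). Then min_{j∈[n]} (∑_{i=1}^j 1/τ_i)^{-1} (S+j) = min_{j∈[j_B]} (∑_{i=1}^j 1/τ_i)^{-1} (S+j), i.e., the extremely slow workers can be ignored in the equilibrium time. -/
import Mathlib


theorem equilibrium_time_ignores_slow_workers (n : ℕ) (hn : 1 ≤ n) (τ : ℕ → ℝ)
    (hpos : ∀ i ∈ Finset.Icc 1 n, 0 < τ i)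
    (hmono : ∀ i j, 1 ≤ i → i ≤ j → j ≤ n → τ i ≤ τ j)
    (jB : ℕ) (hjB : jB ∈ Finset.Icc 1 n)
    (S : ℝ) (hS : 0 ≤ S) (B : ℝ)
    (hB : (S + jB) / (∑ i ∈ Finset.Icc 1 jB, 1 / τ i) ≤ B)
    (hslow : ∀ j, jB < j → j ≤ n → B ≤ τ j) :
    (Finset.Icc 1 n).inf' (Finset.nonempty_Icc.mpr hn)
        (fun j => (S + j) / ∑ i ∈ Finset.Icc 1 j, 1 / τ i)
      = (Finset.Icc 1 jB).inf' (Finset.nonempty_Icc.mpr (Finset.mem_Icc.mp hjB).1)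
        (fun j => (S + j) / ∑ i ∈ Finset.Icc 1 j, 1 / τ i) := by
  obtain ⟨hjB1, hjBn⟩ := Finset.mem_Icc.mp hjB
  have hsub : Finset.Icc 1 jB ⊆ Finset.Icc 1 n := Finset.Icc_subset_Icc_right hjBn
  set f : ℕ → ℝ := fun j => (S + j) / ∑ i ∈ Finset.Icc 1 j, 1 / τ i with hf
  have hApos : 0 < ∑ i ∈ Finset.Icc 1 jB, 1 / τ i := by
    apply Finset.sum_pos
    · intro i hi
      exact one_div_pos.mpr (hpos i (hsub hi))
    · exact Finset.nonempty_Icc.mpr hjB1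
  set A := ∑ i ∈ Finset.Icc 1 jB, 1 / τ i with hA
  have hBpos : 0 < B := by
    have : 0 < (S + jB) / A := by
      apply div_pos _ hApos
      have : (0:ℝ) < jB := by exact_mod_cast hjB1
      linarith
    linarith
  have hfjB : f jB ≤ B := hB
  -- key: for j > jB, f jB ≤ f j
  have key : ∀ j, jB < j → j ≤ n → f jB ≤ f j := by
    intro j hj1 hj2
    have hsplit : Finset.Icc 1 jB ∪ Finset.Ioc jB j = Finset.Icc 1 j := by
      ext a
      simp [Finset.mem_Ioc, Finset.mem_Icc]
      omega
    have hdisj : Disjoint (Finset.Icc 1 jB) (Finset.Ioc jB j) := by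
      simp [Finset.disjoint_left]
      intro a _ ha2 ha3
      omega
    have hsum : ∑ i ∈ Finset.Icc 1 j, 1 / τ i = A + ∑ i ∈ Finset.Ioc jB j, 1 / τ i := by
      rw [← hsplit, Finset.sum_union hdisj]
    set E := ∑ i ∈ Finset.Ioc jB j, 1 / τ i with hE
    have hEnonneg : 0 ≤ E := by
      apply Finset.sum_nonneg
      intro i hi
      rw [Finset.mem_Ioc] at hi
      exact (one_div_pos.mpr (hpos i (Finset.mem_Icc.mpr ⟨by omega, le_trans hi.2 hj2⟩))).le
    have hBE : B * E ≤ (j : ℝ) - jB := by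
      have h1 : E ≤ (Finset.Ioc jB j).card • (1 / B) := by
        apply Finset.sum_le_card_nsmul
        intro i hi
        rw [Finset.mem_Ioc] at hi
        exact one_div_le_one_div_of_le hBpos (hslow i hi.1 (le_trans hi.2 hj2))
      rw [Nat.card_Ioc, nsmul_eq_mul] at h1
      have hc : ((j - jB : ℕ) : ℝ) = (j : ℝ) - jB := by
        have := hj1.le
        push_cast [Nat.cast_sub this]
        ring
      rw [hc] at h1
      have h2 := mul_le_mul_of_nonneg_left h1 hBpos.le
      have h3 : B * (((j:ℝ) - jB) * (1 / B)) = (j:ℝ) - jB := by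
        field_simp
      linarith
    have hSB : S + (jB : ℝ) ≤ B * A := by
      rw [div_le_iff₀ hApos] at hB
      linarith
    have hjj : (jB : ℝ) < j := by exact_mod_cast hj1
    simp only [hf]
    rw [hsum]
    rw [div_le_div_iff₀ hApos (by linarith)]
    nlinarith [mul_le_mul_of_nonneg_right hSB hEnonneg,
      mul_le_mul_of_nonneg_left hBE hApos.le]
  apply le_antisymm
  · obtain ⟨m, hm, hmeq⟩ := Finset.exists_mem_eq_inf' (Finset.nonempty_Icc.mpr hjB1) f
    rw [hmeq]
    exact Finset.inf'_le f (hsub hm)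
  · apply Finset.le_inf'
    intro j hj
    rw [Finset.mem_Icc] at hj
    by_cases h : j ≤ jB
    · exact Finset.inf'_le f (Finset.mem_Icc.mpr ⟨hj.1, h⟩)
    · calc (Finset.Icc 1 jB).inf' _ f ≤ f jB := Finset.inf'_le f (Finset.mem_Icc.mpr ⟨hjB1, le_rfl⟩)
        _ ≤ f j := key j (by omega) hj.2
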